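/- The exponential generating function identity ∑_{n=0}^∞ d_{r,n}^B x^n / n! = (e^{-x}/(1-2x)) * ((1+2x)/(1-2x))^r holds as formal power series, where d_{r,n}^B = 2^n ∑_{i=0}^{r} C(r,i) n^{\underline{i}} 2^i ∑_{k=0}^{n-i} C(n-i,k) (-1)^k (i+1)^{\overline{n-i-k}} 2^{-k}. -/

import Mathlib

open Finset PowerSeries

noncomputable def Gs : PowerSeries ℚ := PowerSeries.mk fun n => (2:ℚ)^n

lemma mul_Gs : (1 - 2 * PowerSeries.X : PowerSeries ℚ) * Gs = 1 := by
  have h2 : (2 : PowerSeries ℚ) = PowerSeries.C (R := ℚ) 2 := (map_ofNat (PowerSeries.C (R := ℚ)) 2).symm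
  ext n
  rw [sub_mul, one_mul, mul_assoc, h2]
  cases n with
  | zero => simp [Gs]
  | succ m =>
    simp [Gs, PowerSeries.coeff_succ_X_mul, PowerSeries.coeff_C_mul,
      PowerSeries.coeff_one, pow_succ, mul_comm]

lemma inv_one_sub : (1 - 2 * PowerSeries.X : PowerSeries ℚ)⁻¹ = Gs := by
  rw [PowerSeries.inv_eq_iff_mul_eq_one (by simp), mul_comm, mul_Gs]

lemma Gs_pow (i : ℕ) :
    Gs ^ (i + 1) = PowerSeries.mk (fun n => (2:ℚ)^n * ((n + i).choose i)) := by
  induction i with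
  | zero => simp [Gs]
  | succ i ih =>
    ext n
    rw [pow_succ, ih, PowerSeries.coeff_mul, Finset.Nat.sum_antidiagonal_eq_sum_range_succ_mk]
    simp only [PowerSeries.coeff_mk, Gs]
    have hs : ∑ p ∈ Finset.range (n + 1), ((p + i).choose i : ℚ)
        = ((n + i + 1).choose (i + 1) : ℚ) := by
      exact_mod_cast congrArg (Nat.cast : ℕ → ℚ) (Nat.sum_range_add_choose n i)
    calc ∑ p ∈ Finset.range (n + 1), (2:ℚ)^p * ((p + i).choose i) * 2^(n - p)
        = ∑ p ∈ Finset.range (n + 1), (2:ℚ)^n * ((p + i).choose i) := by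
          apply Finset.sum_congr rfl
          intro p hp
          rw [Finset.mem_range] at hp
          rw [show (2:ℚ)^p * ((p + i).choose i) * 2^(n-p)
              = ((p + i).choose i : ℚ) * (2^p * 2^(n-p)) by ring, ← pow_add,
            show p + (n - p) = n by omega, mul_comm]
      _ = 2^n * ((n + (i+1)).choose (i+1)) := by
          rw [← Finset.mul_sum, hs]
          rw [← add_assoc]

noncomputable def Es : PowerSeries ℚ :=
  PowerSeries.mk (fun n => (-1 : ℚ) ^ n / (n.factorial : ℚ))

lemma coeff_Es_Gs (i m : ℕ) :
    PowerSeries.coeff m (Es * Gs ^ (i + 1)) =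
      ∑ k ∈ Finset.range (m + 1),
        (-1:ℚ)^k / k.factorial * (2^(m-k) * ((m - k + i).choose i)) := by
  rw [Gs_pow, PowerSeries.coeff_mul, Finset.Nat.sum_antidiagonal_eq_sum_range_succ_mk]
  simp only [PowerSeries.coeff_mk, Es]

lemma onetwoGs : ((1 + 2 * PowerSeries.X) * Gs : PowerSeries ℚ) = 1 + 4 * (PowerSeries.X * Gs) := by
  have h : ((1 + 2 * PowerSeries.X) * Gs : PowerSeries ℚ)
      = (1 - 2 * PowerSeries.X) * Gs + 4 * (PowerSeries.X * Gs) := by ring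
  rw [h, mul_Gs]

lemma coeff_rhs (r n : ℕ) :
    PowerSeries.coeff n (Es * Gs * ((1 + 2 * PowerSeries.X) * Gs) ^ r) =
      ∑ i ∈ Finset.range (r + 1), (r.choose i : ℚ) * 4^i *
        (if i ≤ n then PowerSeries.coeff (n - i) (Es * Gs ^ (i + 1)) else 0) := by
  rw [onetwoGs, add_comm, add_pow, Finset.mul_sum, map_sum]
  apply Finset.sum_congr rfl
  intro i _
  have hterm : Es * Gs * ((4 * (PowerSeries.X * Gs)) ^ i * 1 ^ (r - i) * (r.choose i : PowerSeries ℚ))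
      = PowerSeries.C (R := ℚ) ((r.choose i : ℚ) * 4^i) * ((Es * Gs ^ (i + 1)) * PowerSeries.X ^ i) := by
    have hC : PowerSeries.C (R := ℚ) ((r.choose i : ℚ) * 4^i)
        = ((r.choose i : ℕ) : PowerSeries ℚ) * 4^i := by
      rw [map_mul, map_pow, map_natCast, map_ofNat]
    rw [hC]
    ring
  rw [hterm, PowerSeries.coeff_C_mul, PowerSeries.coeff_mul_X_pow', mul_assoc]

/-- `d_{r,n}^B`, via its explicit formula. -/
def dB (r n : ℕ) : ℚ :=
  2 ^ n * ∑ i ∈ Finset.range (r + 1),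
    (r.choose i : ℚ) * (n.descFactorial i) * 2 ^ i *
      ∑ k ∈ Finset.range (n - i + 1),
        ((n - i).choose k : ℚ) * (-1) ^ k * ((i + 1).ascFactorial (n - i - k)) / 2 ^ k

/-- `∑_{n≥0} d_{r,n}^B x^n/n! = (e^{-x}/(1-2x)) ((1+2x)/(1-2x))^r`
as formal power series over `ℚ`. -/
theorem dB_egf (r : ℕ) :
    PowerSeries.mk (fun n => dB r n / (n.factorial : ℚ)) =
      PowerSeries.mk (fun n => (-1 : ℚ) ^ n / (n.factorial : ℚ)) *
        (1 - 2 * PowerSeries.X : PowerSeries ℚ)⁻¹ *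
        ((1 + 2 * PowerSeries.X) * (1 - 2 * PowerSeries.X : PowerSeries ℚ)⁻¹) ^ r := by
  rw [inv_one_sub]
  have hE : (PowerSeries.mk (fun n => (-1 : ℚ) ^ n / (n.factorial : ℚ))) = Es := rfl
  rw [hE]
  ext n
  rw [PowerSeries.coeff_mk, coeff_rhs]
  unfold dB
  rw [Finset.mul_sum, Finset.sum_div]
  apply Finset.sum_congr rfl
  intro i _
  by_cases hin : i ≤ n
  · rw [if_pos hin, coeff_Es_Gs]
    have hfact : ∀ a : ℕ, ((a.factorial : ℚ)) ≠ 0 :=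
      fun a => Nat.cast_ne_zero.mpr (Nat.factorial_ne_zero a)
    have hdF : (n.descFactorial i : ℚ) = (n.factorial : ℚ) / ((n - i).factorial : ℚ) := by
      have := Nat.factorial_mul_descFactorial hin
      have hcast : ((n - i).factorial : ℚ) * (n.descFactorial i : ℚ) = (n.factorial : ℚ) := by
        exact_mod_cast congrArg (Nat.cast : ℕ → ℚ) this
      field_simp [hfact]
      linarith [hcast]
    rw [hdF, Finset.mul_sum, Finset.mul_sum, Finset.mul_sum, Finset.sum_div]
    apply Finset.sum_congr rfl
    intro k hk
    rw [Finset.mem_range] at hk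
    have hkm : k ≤ n - i := by omega
    have hasc : (((i + 1).ascFactorial (n - i - k) : ℕ) : ℚ)
        = (((n - i - k).factorial : ℕ) : ℚ) * (((n - i - k + i).choose i : ℕ) : ℚ) := by
      have h1 := Nat.ascFactorial_eq_factorial_mul_choose i (n - i - k)
      have h2 : (i + (n - i - k)).choose (n - i - k) = (n - i - k + i).choose i := by
        rw [Nat.add_comm (n - i - k) i]
        exact Nat.choose_symm_add.symm
      rw [h1, h2]
      push_cast
      ring
    have hch : ((n - i).choose k : ℚ)
        = ((n - i).factorial : ℚ) / ((k.factorial : ℚ) * (((n - i) - k).factorial : ℚ)) := by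
      have := Nat.choose_mul_factorial_mul_factorial hkm
      have hcast : ((n-i).choose k : ℚ) * (k.factorial : ℚ) * (((n-i)-k).factorial : ℚ)
          = ((n-i).factorial : ℚ) := by exact_mod_cast congrArg (Nat.cast : ℕ → ℚ) this
      field_simp [hfact]
      linarith [hcast]
    rw [hasc, hch]
    have hpow2 : (2:ℚ)^n = 2^(n-i) * 2^i := by rw [← pow_add]; congr 1; omega
    have hpow3 : (2:ℚ)^(n-i) = 2^(n-i-k) * 2^k := by rw [← pow_add]; congr 1; omega
    have h4 : (4:ℚ)^i = 2^i * 2^i := by rw [← mul_pow]; norm_num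
    rw [hpow2, hpow3, h4]
    have h2k : (2:ℚ)^k ≠ 0 := pow_ne_zero _ two_ne_zero
    field_simp [hfact]
  · rw [if_neg hin]
    have : n.descFactorial i = 0 := Nat.descFactorial_eq_zero_iff_lt.mpr (by omega)
    simp [this]
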